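/- No ordinal benchmark (social welfare function from profiles of strict rankings of at least three alternatives by at least three voters to a strict aggregate ranking) can simultaneously satisfy Non-Dictatorship, Pareto Efficiency, Independence of Irrelevant Alternatives, and Universality (unrestricted domain). -/

import Mathlib

open scoped Classical

noncomputable section ArrowAux

variable {V A : Type} [Fintype V] [Fintype A]

/-- Lexicographic order: score first, tie-break with `r`. -/
def arrowLex (s : A → ℕ) (r : A → A → Prop) (a b : A) : Prop :=
  s a < s b ∨ (s a = s b ∧ r a b)

lemma arrowLex_sto (s : A → ℕ) {r : A → A → Prop} (hr : IsStrictTotalOrder A r) :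
    IsStrictTotalOrder A (arrowLex s r) := by
  haveI := hr
  haveI htri : IsTrichotomous A (arrowLex s r) := by
    suffices H : ∀ a b, arrowLex s r a b ∨ a = b ∨ arrowLex s r b a from
      ⟨fun a b hab hba => ((H a b).resolve_left hab).resolve_right hba⟩
    intro a b
    rcases lt_trichotomy (s a) (s b) with h | h | h
    · exact Or.inl (Or.inl h)
    · rcases trichotomous_of r a b with h' | h' | h'
      · exact Or.inl (Or.inr ⟨h, h'⟩)
      · exact Or.inr (Or.inl h')
      · exact Or.inr (Or.inr (Or.inr ⟨h.symm, h'⟩))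
    · exact Or.inr (Or.inr (Or.inl h))
  haveI hirr : IsIrrefl A (arrowLex s r) := by
    constructor
    intro a h
    rcases h with h | ⟨_, h⟩
    · exact lt_irrefl _ h
    · exact irrefl_of r a h
  haveI htr : IsTrans A (arrowLex s r) := by
    constructor
    intro a b c hab hbc
    rcases hab with h1 | ⟨h1, h1'⟩ <;> rcases hbc with h2 | ⟨h2, h2'⟩
    · exact Or.inl (h1.trans h2)
    · exact Or.inl (h2 ▸ h1)
    · exact Or.inl (h1 ▸ h2)
    · exact Or.inr ⟨h1.trans h2, trans_of r h1' h2'⟩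
  haveI : IsStrictOrder A (arrowLex s r) := ⟨⟩
  exact ⟨⟩

lemma arrowLex_of_lt {s : A → ℕ} {r : A → A → Prop} {a b : A} (h : s a < s b) :
    arrowLex s r a b := Or.inl h

lemma arrowLex_tie {s : A → ℕ} {r : A → A → Prop} {a b : A} (h : s a = s b) :
    arrowLex s r a b ↔ r a b := by
  simp [arrowLex, h]

lemma arrowLex_not {s : A → ℕ} {r : A → A → Prop} {a b : A} (h : s b < s a) :
    ¬ arrowLex s r a b := by
  intro hab
  rcases hab with h' | ⟨h', _⟩ <;> omega

lemma arrow_asymm {r : A → A → Prop} (hr : IsStrictTotalOrder A r) {x y : A}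
    (h : r x y) : ¬ r y x := fun h' => by
  haveI := hr
  exact irrefl_of r x (trans_of r h h')

lemma arrow_exists_third (hA : 3 ≤ Fintype.card A) (x y : A) :
    ∃ z : A, z ≠ x ∧ z ≠ y := by
  by_contra h
  push_neg at h
  have hsub : (Finset.univ : Finset A) ⊆ {x, y} := by
    intro a _
    rcases ne_or_eq a x with hax | hax
    · simp [h a hax]
    · simp [hax]
  have := Finset.card_le_card hsub
  have h2 : ({x, y} : Finset A).card ≤ 2 := Finset.card_le_two
  simp [Finset.card_univ] at this
  omega

/-- three-alternative score: x first, y second, z third, rest last -/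
def arrowSc (x y z : A) : A → ℕ :=
  fun a => if a = x then 0 else if a = y then 1 else if a = z then 2 else 3

section WithF

variable (f : (V → A → A → Prop) → (A → A → Prop))

def ArrowValid (R : V → A → A → Prop) : Prop := ∀ i, IsStrictTotalOrder A (R i)

/-- G is decisive for (x,y) -/
def ArrowDec (G : Finset V) (x y : A) : Prop :=
  ∀ R : V → A → A → Prop, ArrowValid R → (∀ i ∈ G, R i x y) → f R x y

/-- G is weakly decisive for (x,y) -/
def ArrowWDec (G : Finset V) (x y : A) : Prop :=
  ∀ R : V → A → A → Prop, ArrowValid R → (∀ i ∈ G, R i x y) →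
    (∀ i ∉ G, R i y x) → f R x y

variable
    (hout : ∀ R : V → A → A → Prop,
      (∀ i, IsStrictTotalOrder A (R i)) → IsStrictTotalOrder A (f R))
    (pareto : ∀ R : V → A → A → Prop, (∀ i, IsStrictTotalOrder A (R i)) →
      ∀ x y : A, (∀ i, R i x y) → f R x y)
    (iia : ∀ R R' : V → A → A → Prop,
      (∀ i, IsStrictTotalOrder A (R i)) → (∀ i, IsStrictTotalOrder A (R' i)) →
      ∀ x y : A, (∀ i, R i x y ↔ R' i x y) → (f R x y ↔ f R' x y))

include hout pareto iia in
lemma arrow_stepA (G : Finset V) {x y z : A} (hxy : x ≠ y) (hxz : x ≠ z)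
    (hyz : y ≠ z) (h : ArrowWDec f G x y) : ArrowDec f G x z := by
  intro R hR hG
  set sIn : A → ℕ := arrowSc x y z with hsIn
  set sOut : A → ℕ := fun a => if a = y then 0 else if a = x then 1 else if a = z then 1 else 2 with hsOut
  set R' : V → A → A → Prop := fun i =>
    if i ∈ G then arrowLex sIn (R i) else arrowLex sOut (R i) with hR'def
  have hR' : ArrowValid R' := by
    intro i
    by_cases hi : i ∈ G <;> simp only [hR'def, hi, if_true, if_false] <;>
      exact arrowLex_sto _ (hR i)
  -- score computations
  have hsIx : sIn x = 0 := by simp [hsIn, arrowSc]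
  have hsIy : sIn y = 1 := by simp [hsIn, arrowSc, hxy.symm]
  have hsIz : sIn z = 2 := by simp [hsIn, arrowSc, hxz.symm, hyz.symm]
  have hsOx : sOut x = 1 := by simp [hsOut, hxy]
  have hsOy : sOut y = 0 := by simp [hsOut]
  have hsOz : sOut z = 1 := by simp [hsOut, hyz.symm, hxz.symm]
  have hfxy : f R' x y := by
    apply h R' hR'
    · intro i hi
      simp only [hR'def, hi, if_true]
      exact arrowLex_of_lt (by omega)
    · intro i hi
      simp only [hR'def, hi, if_false]
      exact arrowLex_of_lt (by omega)
  have hfyz : f R' y z := by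
    apply pareto R' hR'
    intro i
    by_cases hi : i ∈ G <;> simp only [hR'def, hi, if_true, if_false] <;>
      exact arrowLex_of_lt (by omega)
  have hfxz : f R' x z := by
    haveI := hout R' hR'
    exact trans_of (f R') hfxy hfyz
  have hiff : ∀ i, R i x z ↔ R' i x z := by
    intro i
    by_cases hi : i ∈ G <;> simp only [hR'def, hi, if_true, if_false]
    · exact iff_of_true (hG i hi) (arrowLex_of_lt (by omega))
    · exact (arrowLex_tie (by omega)).symm
  exact (iia R R' hR hR' x z hiff).mpr hfxz

include hout pareto iia in
lemma arrow_stepB (G : Finset V) {x y z : A} (hxy : x ≠ y) (hxz : x ≠ z)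
    (hyz : y ≠ z) (h : ArrowWDec f G x y) : ArrowDec f G z y := by
  intro R hR hG
  set sIn : A → ℕ := arrowSc z x y with hsIn
  set sOut : A → ℕ := fun a => if a = x then 1 else 0 with hsOut
  set R' : V → A → A → Prop := fun i =>
    if i ∈ G then arrowLex sIn (R i) else arrowLex sOut (R i) with hR'def
  have hR' : ArrowValid R' := by
    intro i
    by_cases hi : i ∈ G <;> simp only [hR'def, hi, if_true, if_false] <;>
      exact arrowLex_sto _ (hR i)
  have hsIz : sIn z = 0 := by simp [hsIn, arrowSc]
  have hsIx : sIn x = 1 := by simp [hsIn, arrowSc, hxz]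
  have hsIy : sIn y = 2 := by simp [hsIn, arrowSc, hyz, hxy.symm]
  have hsOx : sOut x = 1 := by simp [hsOut]
  have hsOy : sOut y = 0 := by simp [hsOut, hxy.symm]
  have hsOz : sOut z = 0 := by simp [hsOut, hxz.symm]
  have hfxy : f R' x y := by
    apply h R' hR'
    · intro i hi
      simp only [hR'def, hi, if_true]
      exact arrowLex_of_lt (by omega)
    · intro i hi
      simp only [hR'def, hi, if_false]
      exact arrowLex_of_lt (by omega)
  have hfzx : f R' z x := by
    apply pareto R' hR'
    intro i
    by_cases hi : i ∈ G <;> simp only [hR'def, hi, if_true, if_false] <;>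
      exact arrowLex_of_lt (by omega)
  have hfzy : f R' z y := by
    haveI := hout R' hR'
    exact trans_of (f R') hfzx hfxy
  have hiff : ∀ i, R i z y ↔ R' i z y := by
    intro i
    by_cases hi : i ∈ G <;> simp only [hR'def, hi, if_true, if_false]
    · exact iff_of_true (hG i hi) (arrowLex_of_lt (by omega))
    · exact (arrowLex_tie (by omega)).symm
  exact (iia R R' hR hR' z y hiff).mpr hfzy

include hout pareto iia in
lemma arrow_expand (hA : 3 ≤ Fintype.card A) (G : Finset V) {x y : A}
    (hxy : x ≠ y) (h : ArrowWDec f G x y) :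
    ∀ a b : A, a ≠ b → ArrowDec f G a b := by
  have wd : ∀ a b : A, a ≠ b → ArrowDec f G a b → ArrowWDec f G a b := by
    intro a b _ hd R hR hG _
    exact hd R hR hG
  -- first: strong decisiveness over (x,y) itself
  obtain ⟨c, hcx, hcy⟩ := arrow_exists_third hA x y
  have hxc : ArrowDec f G x c :=
    arrow_stepA f hout pareto iia G hxy hcx.symm hcy.symm h
  have hxy' : ArrowDec f G x y :=
    arrow_stepA f hout pareto iia G hcx.symm hxy hcy (wd _ _ hcx.symm hxc)
  -- (1): decisive over (x,z) for all z ≠ x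
  have h1 : ∀ z : A, z ≠ x → ArrowDec f G x z := by
    intro z hzx
    rcases eq_or_ne z y with rfl | hzy
    · exact hxy'
    · exact arrow_stepA f hout pareto iia G hxy hzx.symm
        (fun e => hzy e.symm) h
  -- (2): decisive over (w,z) for all z ≠ x, w ≠ z
  have h2 : ∀ w z : A, z ≠ x → w ≠ z → ArrowDec f G w z := by
    intro w z hzx hwz
    rcases eq_or_ne w x with rfl | hwx
    · exact h1 z hzx
    · exact arrow_stepB f hout pareto iia G hzx.symm hwx.symm hwz.symm
        (wd _ _ hzx.symm (h1 z hzx))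
  intro a b hab
  rcases eq_or_ne b x with rfl | hbx
  · obtain ⟨c, hca, hcb⟩ := arrow_exists_third hA a b
    have hac : ArrowDec f G a c := h2 a c hcb (fun e => hca e.symm)
    exact arrow_stepA f hout pareto iia G (fun e => hca e.symm) hab
      (fun e => hcb e) (wd _ _ (fun e => hca e.symm) hac)
  · exact h2 a b hbx hab

include hout pareto iia in
lemma arrow_contract (hA : 3 ≤ Fintype.card A) (G1 G2 : Finset V)
    (hdisj : Disjoint G1 G2)
    (hAll : ∀ a b : A, a ≠ b → ArrowDec f (G1 ∪ G2) a b) :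
    (∀ a b : A, a ≠ b → ArrowDec f G1 a b) ∨
    (∀ a b : A, a ≠ b → ArrowDec f G2 a b) := by
  -- pick three distinct alternatives
  have hAne : Nonempty A := Fintype.card_pos_iff.mp (by omega)
  obtain ⟨x⟩ := hAne
  obtain ⟨y, hyx⟩ := Fintype.exists_ne_of_one_lt_card (by omega) x
  obtain ⟨z, hzx, hzy⟩ := arrow_exists_third hA x y
  have hxy : x ≠ y := hyx.symm
  have hxz : x ≠ z := hzx.symm
  have hyz : y ≠ z := hzy.symm
  set r0 : A → A → Prop := WellOrderingRel with hr0
  have hr0sto : IsStrictTotalOrder A r0 := inferInstance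
  set R' : V → A → A → Prop := fun i =>
    if i ∈ G1 then arrowLex (arrowSc x y z) r0
    else if i ∈ G2 then arrowLex (arrowSc y z x) r0
    else arrowLex (arrowSc z x y) r0 with hR'def
  have hR' : ArrowValid R' := by
    intro i
    by_cases h1 : i ∈ G1 <;> by_cases h2 : i ∈ G2 <;>
      simp only [hR'def, h1, h2, if_true, if_false] <;> exact arrowLex_sto _ hr0sto
  have s1x : arrowSc x y z x = 0 := by simp [arrowSc]
  have s1y : arrowSc x y z y = 1 := by simp [arrowSc, hxy.symm]
  have s1z : arrowSc x y z z = 2 := by simp [arrowSc, hxz.symm, hyz.symm]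
  have s2y : arrowSc y z x y = 0 := by simp [arrowSc]
  have s2z : arrowSc y z x z = 1 := by simp [arrowSc, hyz.symm]
  have s2x : arrowSc y z x x = 2 := by simp [arrowSc, hxy, hxz]
  have s3z : arrowSc z x y z = 0 := by simp [arrowSc]
  have s3x : arrowSc z x y x = 1 := by simp [arrowSc, hxz]
  have s3y : arrowSc z x y y = 2 := by simp [arrowSc, hyz, hxy.symm]
  have hfyz : f R' y z := by
    apply hAll y z hyz R' hR'
    intro i hi
    rcases Finset.mem_union.mp hi with h1 | h2
    · simp only [hR'def, h1, if_true]
      exact arrowLex_of_lt (by omega)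
    · have h1 : i ∉ G1 := fun h => (Finset.disjoint_left.mp hdisj h) h2
      simp only [hR'def, h1, h2, if_true, if_false]
      exact arrowLex_of_lt (by omega)
  haveI := hout R' hR'
  rcases trichotomous_of (f R') x z with hfxz | heq | hfzx
  · -- G1 weakly decisive over (x,z)
    left
    apply arrow_expand f hout pareto iia hA G1 hxz
    intro R hR hG1 hOut
    have hiff : ∀ i, R i x z ↔ R' i x z := by
      intro i
      by_cases h1 : i ∈ G1
      · simp only [hR'def, h1, if_true]
        exact iff_of_true (hG1 i h1) (arrowLex_of_lt (by omega))
      · have hRzx : R i z x := hOut i h1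
        have hnR : ¬ R i x z := arrow_asymm (hR i) hRzx
        by_cases h2 : i ∈ G2 <;>
          simp only [hR'def, h1, h2, if_true, if_false] <;>
          exact iff_of_false hnR (arrowLex_not (by omega))
    exact (iia R R' hR hR' x z hiff).mpr hfxz
  · exact absurd heq hxz
  · -- f R' y x by transitivity; G2 weakly decisive over (y,x)
    have hfyx : f R' y x := trans_of (f R') hfyz hfzx
    right
    apply arrow_expand f hout pareto iia hA G2 hyx
    intro R hR hG2 hOut
    have hiff : ∀ i, R i y x ↔ R' i y x := by
      intro i
      by_cases h2 : i ∈ G2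
      · have h1 : i ∉ G1 := fun h => (Finset.disjoint_left.mp hdisj h) h2
        simp only [hR'def, h1, h2, if_true, if_false]
        exact iff_of_true (hG2 i h2) (arrowLex_of_lt (by omega))
      · have hRxy : R i x y := hOut i h2
        have hnR : ¬ R i y x := arrow_asymm (hR i) hRxy
        by_cases h1 : i ∈ G1 <;>
          simp only [hR'def, h1, h2, if_true, if_false] <;>
          exact iff_of_false hnR (arrowLex_not (by omega))
    exact (iia R R' hR hR' y x hiff).mpr hfyx

end WithF

end ArrowAux

/-- Arrow's Impossibility Theorem for ordinal benchmarks: any aggregation rule `f`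
mapping profiles of strict total orders (one per voter/task) to a strict total order,
satisfying Pareto Efficiency and IIA on all profiles (Universality), with at least
three voters and three alternatives, must have a dictator (Non-Dictatorship fails). -/
theorem arrow_impossibility_for_benchmarks
    {V A : Type} [Fintype V] [Fintype A]
    (hV : 3 ≤ Fintype.card V) (hA : 3 ≤ Fintype.card A)
    (f : (V → A → A → Prop) → (A → A → Prop))
    (hout : ∀ R : V → A → A → Prop,
      (∀ i, IsStrictTotalOrder A (R i)) → IsStrictTotalOrder A (f R))
    (pareto : ∀ R : V → A → A → Prop, (∀ i, IsStrictTotalOrder A (R i)) →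
      ∀ x y : A, (∀ i, R i x y) → f R x y)
    (iia : ∀ R R' : V → A → A → Prop,
      (∀ i, IsStrictTotalOrder A (R i)) → (∀ i, IsStrictTotalOrder A (R' i)) →
      ∀ x y : A, (∀ i, R i x y ↔ R' i x y) → (f R x y ↔ f R' x y)) :
    ∃ i : V, ∀ R : V → A → A → Prop, (∀ i, IsStrictTotalOrder A (R i)) →
      ∀ x y : A, R i x y → f R x y := by
  -- by strong induction on the size of a decisive coalition
  have key : ∀ n : ℕ, ∀ G : Finset V, G.card = n → G.Nonempty →
      (∀ a b : A, a ≠ b → ArrowDec f G a b) →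
      ∃ i ∈ G, ∀ a b : A, a ≠ b → ArrowDec f {i} a b := by
    intro n
    induction n using Nat.strong_induction_on with
    | _ n ih =>
      intro G hcard hne hdec
      obtain ⟨i, hi⟩ := hne
      by_cases hc : G.card = 1
      · obtain ⟨j, hj⟩ := Finset.card_eq_one.mp hc
        have : i = j := by simpa [hj] using hi
        subst this
        exact ⟨i, hi, hj ▸ hdec⟩
      · have hc2 : 2 ≤ G.card := by
          have := Finset.card_pos.mpr ⟨i, hi⟩
          omega
        have hdisj : Disjoint ({i} : Finset V) (G.erase i) := by
          simp
        have hunion : ({i} : Finset V) ∪ G.erase i = G := by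
          ext j
          simp only [Finset.mem_union, Finset.mem_singleton, Finset.mem_erase]
          constructor
          · rintro (rfl | ⟨-, hj⟩)
            · exact hi
            · exact hj
          · intro hj
            by_cases h : j = i
            · exact Or.inl h
            · exact Or.inr ⟨h, hj⟩
        have hdec' : ∀ a b : A, a ≠ b → ArrowDec f (({i} : Finset V) ∪ G.erase i) a b := by
          rw [hunion]; exact hdec
        rcases arrow_contract f hout pareto iia hA _ _ hdisj hdec' with h1 | h2
        · exact ⟨i, hi, h1⟩
        · have hcardlt : (G.erase i).card < n := by
            rw [Finset.card_erase_of_mem hi]; omega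
          have hne2 : (G.erase i).Nonempty := by
            rw [← Finset.card_pos, Finset.card_erase_of_mem hi]; omega
          obtain ⟨j, hj, hd⟩ := ih _ hcardlt _ rfl hne2 h2
          exact ⟨j, Finset.mem_of_mem_erase hj, hd⟩
  have hVne : Nonempty V := Fintype.card_pos_iff.mp (by omega)
  have huniv : ∀ a b : A, a ≠ b → ArrowDec f (Finset.univ : Finset V) a b := by
    intro a b _ R hR hG
    exact pareto R hR a b (fun i => hG i (Finset.mem_univ i))
  obtain ⟨i, -, hd⟩ := key (Fintype.card V) Finset.univ (Finset.card_univ) Finset.univ_nonempty huniv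
  refine ⟨i, fun R hR x y hxy => ?_⟩
  have hne : x ≠ y := by
    rintro rfl
    haveI := hR i
    exact irrefl_of (R i) x hxy
  exact hd x y hne R hR (fun j hj => by rwa [Finset.mem_singleton.mp hj])
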